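/- Let v_1, ..., v_n (n ≥ 2) be independent nonnegative real-valued random variables with finite expectations, and define WEL = E[max_i v_i], SPA = E[second-max_i v_i], w_i, s_i, r_i as in the second-price auction decomposition (with a fixed tie-breaking rule). Then for every i: SPA ≤ r_i ≤ WEL ≤ r_i + w_i ≤ 2·WEL. -/

import Mathlib

open MeasureTheory ProbabilityTheory

private lemma le_ciSup_fin' {ι : Type*} [Finite ι] (f : ι → ℝ) (j : ι) : f j ≤ ⨆ k, f k :=
  le_ciSup (Set.Finite.bddAbove (Set.finite_range f)) j

theorem stmt3 {Ω : Type*} [MeasurableSpace Ω] (μ : Measure Ω) [IsProbabilityMeasure μ]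
    (n : ℕ) (hn : 2 ≤ n) (v : Fin n → Ω → ℝ)
    (hmeas : ∀ i, Measurable (v i)) (hnonneg : ∀ i ω, 0 ≤ v i ω)
    (hint : ∀ i, Integrable (v i) μ)
    (hindep : iIndepFun v μ)
    (win : Ω → Fin n) (hwin_meas : Measurable win)
    (hwin : ∀ ω i, v i ω ≤ v (win ω) ω)
    (w s r : Fin n → ℝ)
    (hw : ∀ i, w i = ∫ ω, (if win ω = i then v i ω else 0) ∂μ)
    (hs : ∀ i, s i = ∫ ω, (if win ω = i then ⨆ j : {j : Fin n // j ≠ i}, v j ω else 0) ∂μ)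
    (hr : ∀ i, r i = ∫ ω, (⨆ j : {j : Fin n // j ≠ i}, v j ω) ∂μ)
    (WEL SPA : ℝ)
    (hWEL : WEL = ∫ ω, (⨆ i, v i ω) ∂μ)
    (hSPA : SPA = ∫ ω, (⨆ p : {p : Fin n × Fin n // p.1 ≠ p.2},
      min (v (↑p : Fin n × Fin n).1 ω) (v (↑p : Fin n × Fin n).2 ω)) ∂μ) :
    ∀ i, SPA ≤ r i ∧ r i ≤ WEL ∧ WEL ≤ r i + w i ∧ r i + w i ≤ 2 * WEL := by
  intro i
  have hne : NeZero n := ⟨by omega⟩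
  -- nonempty index types
  have hnt : Nontrivial (Fin n) := Fin.nontrivial_iff_two_le.mpr hn
  have hjne : Nonempty {j : Fin n // j ≠ i} := by
    obtain ⟨j, hj⟩ := exists_ne i
    exact ⟨⟨j, hj⟩⟩
  have hpne : Nonempty {p : Fin n × Fin n // p.1 ≠ p.2} := by
    obtain ⟨j, hj⟩ := exists_ne i
    exact ⟨⟨(j, i), hj⟩⟩
  -- dominating integrable function
  set g : Ω → ℝ := fun ω => ∑ j : Fin n, v j ω with hg
  have hgint : Integrable g μ := integrable_finset_sum _ fun j _ => hint j
  have hle_g : ∀ (j : Fin n) (ω : Ω), v j ω ≤ g ω := fun j ω =>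
    Finset.single_le_sum (fun k _ => hnonneg k ω) (Finset.mem_univ j)
  -- the four integrands
  set A : Ω → ℝ := fun ω => ⨆ p : {p : Fin n × Fin n // p.1 ≠ p.2},
      min (v (↑p : Fin n × Fin n).1 ω) (v (↑p : Fin n × Fin n).2 ω) with hA
  set B : Ω → ℝ := fun ω => ⨆ j : {j : Fin n // j ≠ i}, v j ω with hB
  set C : Ω → ℝ := fun ω => ⨆ j, v j ω with hC
  set D : Ω → ℝ := fun ω => if win ω = i then v i ω else 0 with hD
  have hAmeas : Measurable A := Measurable.iSup fun p =>
    (hmeas _).min (hmeas _)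
  have hBmeas : Measurable B := Measurable.iSup fun j => hmeas j
  have hCmeas : Measurable C := Measurable.iSup fun j => hmeas j
  have hDmeas : Measurable D :=
    Measurable.ite (hwin_meas (measurableSet_singleton i)) (hmeas i) measurable_const
  have hAle : ∀ ω, A ω ≤ g ω := by
    intro ω
    refine ciSup_le fun p => ?_
    exact le_trans (min_le_left _ _) (hle_g _ ω)
  have hAnn : ∀ ω, 0 ≤ A ω := by
    intro ω
    obtain ⟨p⟩ := hpne
    simp only [hA]
    exact le_trans (le_min (hnonneg _ ω) (hnonneg _ ω))
      (le_ciSup_fin' (fun p : {p : Fin n × Fin n // p.1 ≠ p.2} =>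
        min (v (↑p : Fin n × Fin n).1 ω) (v (↑p : Fin n × Fin n).2 ω)) p)
  have hBle : ∀ ω, B ω ≤ g ω := fun ω => ciSup_le fun j => hle_g j ω
  have hBnn : ∀ ω, 0 ≤ B ω := by
    intro ω
    obtain ⟨j⟩ := hjne
    simp only [hB]
    exact le_trans (hnonneg j ω)
      (le_ciSup_fin' (fun j : {j : Fin n // j ≠ i} => v j ω) j)
  have hCle : ∀ ω, C ω ≤ g ω := fun ω => ciSup_le fun j => hle_g j ω
  have hCnn : ∀ ω, 0 ≤ C ω := by
    intro ω
    simp only [hC]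
    exact le_trans (hnonneg i ω) (le_ciSup_fin' (fun j => v j ω) i)
  have hDle : ∀ ω, D ω ≤ g ω := by
    intro ω
    by_cases h : win ω = i
    · simpa [hD, h] using hle_g i ω
    · simp only [hD, h, if_neg, if_false]
      exact Finset.sum_nonneg fun k _ => hnonneg k ω
  have hDnn : ∀ ω, 0 ≤ D ω := by
    intro ω
    by_cases h : win ω = i <;> simp [hD, h, hnonneg i ω]
  have mkint : ∀ f : Ω → ℝ, Measurable f → (∀ ω, 0 ≤ f ω) → (∀ ω, f ω ≤ g ω) →
      Integrable f μ := by
    intro f hf hnn hle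
    refine hgint.mono' hf.aestronglyMeasurable (Filter.Eventually.of_forall fun ω => ?_)
    rw [Real.norm_eq_abs, abs_of_nonneg (hnn ω)]
    exact hle ω
  have hAint := mkint A hAmeas hAnn hAle
  have hBint := mkint B hBmeas hBnn hBle
  have hCint := mkint C hCmeas hCnn hCle
  have hDint := mkint D hDmeas hDnn hDle
  -- pointwise inequalities
  have h1 : ∀ ω, A ω ≤ B ω := by
    intro ω
    simp only [hA, hB]
    refine ciSup_le fun p => ?_
    rcases p with ⟨⟨a, b⟩, hab⟩
    by_cases ha : a = i
    · have hb : b ≠ i := fun h => hab (h ▸ ha)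
      exact le_trans (min_le_right _ _)
        (le_ciSup_fin' (fun j : {j : Fin n // j ≠ i} => v j ω) ⟨b, hb⟩)
    · exact le_trans (min_le_left _ _)
        (le_ciSup_fin' (fun j : {j : Fin n // j ≠ i} => v j ω) ⟨a, ha⟩)
  have h2 : ∀ ω, B ω ≤ C ω := by
    intro ω
    simp only [hB, hC]
    exact ciSup_le fun j => le_ciSup_fin' (fun k => v k ω) (j : Fin n)
  have h3 : ∀ ω, C ω ≤ B ω + D ω := by
    intro ω
    have hCwin : C ω ≤ v (win ω) ω := ciSup_le fun j => hwin ω j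
    by_cases h : win ω = i
    · have : D ω = v i ω := by simp [hD, h]
      rw [this]
      calc C ω ≤ v i ω := h ▸ hCwin
        _ ≤ B ω + v i ω := le_add_of_nonneg_left (hBnn ω)
    · have : D ω = 0 := by simp [hD, h]
      rw [this, add_zero]
      have hwB : v (win ω) ω ≤ B ω := by
        simp only [hB]
        exact le_ciSup_fin' (fun j : {j : Fin n // j ≠ i} => v j ω) ⟨win ω, h⟩
      exact le_trans hCwin hwB
  have h4 : ∀ ω, B ω + D ω ≤ 2 * C ω := by
    intro ω
    have hD' : D ω ≤ C ω := by
      by_cases h : win ω = i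
      · simp only [hD, hC, h, if_pos]
        exact le_ciSup_fin' (fun j => v j ω) i
      · simp [hD, h, hCnn ω]
    linarith [h2 ω]
  refine ⟨?_, ?_, ?_, ?_⟩
  · rw [hSPA, hr]
    exact integral_mono hAint hBint h1
  · rw [hr, hWEL]
    exact integral_mono hBint hCint h2
  · rw [hr, hw, hWEL, ← integral_add hBint hDint]
    exact integral_mono hCint (hBint.add hDint) h3
  · rw [hr, hw, hWEL, ← integral_add hBint hDint]
    have : (2 : ℝ) * ∫ ω, C ω ∂μ = ∫ ω, 2 * C ω ∂μ := by
      rw [integral_const_mul]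
    rw [this]
    exact integral_mono (hBint.add hDint) (hCint.const_mul 2) h4
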